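/- arXiv:2509.09802 — 2 statements merged into one kernel-verified Lean document; each statement's English description precedes it below -/
import Mathlib

section
/- For any vector x in R^d with all coordinates equal in absolute value, the Euclidean norm of x equals sqrt(d/s) times the Euclidean norm of the hard-thresholded vector HT_s(x) that keeps only s of the coordinates. More generally, for any x in R^d and 1 ≤ s ≤ d, ‖x‖ ≤ sqrt(d/s) · ‖HT_s(x)‖, where HT_s(x) retains the s largest-magnitude entries of x and sets the rest to zero. -/
open Finset
open scoped RealInnerProductSpace

noncomputable def htSet {d : ℕ} (k : ℕ) (x : EuclideanSpace ℝ (Fin d)) : Finset (Fin d) :=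
  (Finset.exists_max_image ((Finset.univ : Finset (Fin d)).powersetCard (min k d))
    (fun S => ∑ i ∈ S, (x i) ^ 2)
    ((Finset.powersetCard_nonempty).2 (by simp))).choose

/-- Hard thresholding: keep the `k` entries of largest magnitude, zero the rest. -/
noncomputable def HT {d : ℕ} (k : ℕ) (x : EuclideanSpace ℝ (Fin d)) : EuclideanSpace ℝ (Fin d) :=
  WithLp.toLp 2 (fun i => if i ∈ htSet k x then x i else 0)

/-- Support of a vector. -/
noncomputable def supp {d : ℕ} (x : EuclideanSpace ℝ (Fin d)) : Finset (Fin d) :=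
  Finset.univ.filter (fun i => x i ≠ 0)

/-- Restriction of a vector to an index set. -/
noncomputable def restr {d : ℕ} (S : Finset (Fin d)) (x : EuclideanSpace ℝ (Fin d)) :
    EuclideanSpace ℝ (Fin d) :=
  WithLp.toLp 2 (fun i => if i ∈ S then x i else 0)

/-- ℓ1 norm. -/
noncomputable def l1norm {d : ℕ} (x : EuclideanSpace ℝ (Fin d)) : ℝ := ∑ i, |x i|

/-- ℓ∞ norm. -/
noncomputable def linf {d : ℕ} (x : EuclideanSpace ℝ (Fin d)) : ℝ := ⨆ i, |x i|

theorem stmt0 (d s : ℕ) (hs : 1 ≤ s) (hsd : s ≤ d) (x : EuclideanSpace ℝ (Fin d)) :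
    ‖x‖ ≤ Real.sqrt ((d : ℝ) / s) * ‖HT s x‖ ∧
      ((∀ i j, |x i| = |x j|) → ‖x‖ = Real.sqrt ((d : ℝ) / s) * ‖HT s x‖) := by
  have hspec := (Finset.exists_max_image ((Finset.univ : Finset (Fin d)).powersetCard (min s d))
    (fun S => ∑ i ∈ S, (x i) ^ 2)
    ((Finset.powersetCard_nonempty).2 (by simp))).choose_spec
  rw [show (Finset.exists_max_image ((Finset.univ : Finset (Fin d)).powersetCard (min s d))
    (fun S => ∑ i ∈ S, (x i) ^ 2)
    ((Finset.powersetCard_nonempty).2 (by simp))).choose = htSet s x from rfl] at hspec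
  obtain ⟨hmem, hmax⟩ := hspec
  set S := htSet s x with hSdef
  rw [Finset.mem_powersetCard, min_eq_left hsd] at hmem
  obtain ⟨-, hcard⟩ := hmem
  have hs0 : (0:ℝ) < s := by exact_mod_cast hs
  -- norms as sums of squares
  have hnx : ‖x‖ = Real.sqrt (∑ i, (x i)^2 : ℝ) := by
    rw [EuclideanSpace.norm_eq]
    congr 1; apply Finset.sum_congr rfl; intro i _; rw [Real.norm_eq_abs, sq_abs]
  have hnH : ‖HT s x‖ = Real.sqrt (∑ i ∈ S, (x i)^2 : ℝ) := by
    rw [EuclideanSpace.norm_eq]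
    congr 1
    rw [← Finset.sum_filter_add_sum_filter_not Finset.univ (fun i => i ∈ S)]
    have h1 : ∀ i ∈ Finset.univ.filter (fun i => i ∈ S), ‖HT s x i‖^2 = (x i)^2 := by
      intro i hi; simp at hi
      simp [HT, ← hSdef, hi, sq_abs]
    have h2 : ∀ i ∈ Finset.univ.filter (fun i => ¬ i ∈ S), ‖HT s x i‖^2 = 0 := by
      intro i hi; simp at hi
      simp [HT, ← hSdef, hi]
    rw [Finset.sum_congr rfl h1, Finset.sum_congr rfl h2, Finset.sum_const_zero, add_zero]
    rw [Finset.filter_mem_eq_inter, Finset.univ_inter]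
  -- swap argument
  have hkey : ∀ j ∉ S, ∀ i ∈ S, (x j)^2 ≤ (x i)^2 := by
    intro j hj i hi
    have hj' : j ∉ S.erase i := fun h => hj (Finset.mem_of_mem_erase h)
    have hcard' : (insert j (S.erase i)).card = s := by
      rw [Finset.card_insert_of_notMem hj', Finset.card_erase_of_mem hi, hcard]
      omega
    have := hmax (insert j (S.erase i)) (by
      rw [Finset.mem_powersetCard, min_eq_left hsd]; exact ⟨Finset.subset_univ _, hcard'⟩)
    simp only at this
    rw [Finset.sum_insert hj', Finset.sum_erase_eq_sub hi] at this
    linarith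
  have hSne : S.Nonempty := Finset.card_pos.mp (by omega)
  obtain ⟨i0, hi0, hmin⟩ := Finset.exists_min_image S (fun i => (x i)^2) hSne
  have hcompl : ∑ i ∈ Sᶜ, (x i)^2 ≤ ((d - s : ℕ) : ℝ) * (x i0)^2 := by
    have : ∀ i ∈ Sᶜ, (x i)^2 ≤ (x i0)^2 := fun i hi =>
      hkey i (Finset.mem_compl.mp hi) i0 hi0
    calc ∑ i ∈ Sᶜ, (x i)^2 ≤ ∑ _i ∈ Sᶜ, (x i0)^2 := Finset.sum_le_sum this
      _ = (Sᶜ.card : ℝ) * (x i0)^2 := by rw [Finset.sum_const, nsmul_eq_mul]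
      _ = ((d - s : ℕ) : ℝ) * (x i0)^2 := by
          rw [Finset.card_compl, hcard]; simp
  have hSsum : (s : ℝ) * (x i0)^2 ≤ ∑ i ∈ S, (x i)^2 := by
    calc (s : ℝ) * (x i0)^2 = ∑ _i ∈ S, (x i0)^2 := by
          rw [Finset.sum_const, nsmul_eq_mul, hcard]
      _ ≤ ∑ i ∈ S, (x i)^2 := Finset.sum_le_sum (fun i hi => hmin i hi)
  have hsplit : (∑ i, (x i)^2 : ℝ) = ∑ i ∈ S, (x i)^2 + ∑ i ∈ Sᶜ, (x i)^2 :=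
    (Finset.sum_add_sum_compl S _).symm
  have hmain : (∑ i, (x i)^2 : ℝ) ≤ ((d:ℝ)/s) * ∑ i ∈ S, (x i)^2 := by
    rw [div_mul_eq_mul_div, le_div_iff₀ hs0]
    have hds : ((d - s : ℕ) : ℝ) = (d:ℝ) - s := by
      rw [Nat.cast_sub hsd]
    have h0 : (0:ℝ) ≤ (d:ℝ) - s := by rw [← hds]; positivity
    rw [hds] at hcompl
    nlinarith [hcompl, hSsum, hsplit, mul_le_mul_of_nonneg_left hcompl hs0.le, mul_le_mul_of_nonneg_left hSsum h0]
  have hHnn : (0:ℝ) ≤ ∑ i ∈ S, (x i)^2 := Finset.sum_nonneg (fun i _ => sq_nonneg _)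
  constructor
  · rw [hnx, hnH, ← Real.sqrt_mul (by positivity)]
    exact Real.sqrt_le_sqrt hmain
  · intro hall
    have hc : ∀ i, (x i)^2 = (x i0)^2 := by
      intro i
      have := hall i i0
      rw [← sq_abs (x i), ← sq_abs (x i0), this]
    have h1 : (∑ i, (x i)^2 : ℝ) = (d:ℝ) * (x i0)^2 := by
      rw [Finset.sum_congr rfl (fun i _ => hc i), Finset.sum_const, nsmul_eq_mul]
      simp
    have h2 : (∑ i ∈ S, (x i)^2 : ℝ) = (s:ℝ) * (x i0)^2 := by
      rw [Finset.sum_congr rfl (fun i _ => hc i), Finset.sum_const, nsmul_eq_mul, hcard]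
    rw [hnx, hnH, h1, h2, ← Real.sqrt_mul (by positivity)]
    congr 1
    field_simp
end

section
/- Let I be a finite index set, z ∈ R^I, and let θ = HT_s(z) be the projection of z onto the set of s-sparse vectors. Then for any s*-sparse vector θ̂ ∈ R^I with s* ≤ s ≤ |I|, one has ‖θ − z‖² ≤ ((|I| − s)/(|I| − s*)) · ‖θ̂ − z‖². -/
open Finset
open scoped RealInnerProductSpace

lemma htSet_spec {d : ℕ} (k : ℕ) (x : EuclideanSpace ℝ (Fin d)) :
    (htSet k x).card = min k d ∧
      ∀ S : Finset (Fin d), S.card = min k d →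
        ∑ i ∈ S, (x i) ^ 2 ≤ ∑ i ∈ htSet k x, (x i) ^ 2 := by
  have h := (Finset.exists_max_image ((Finset.univ : Finset (Fin d)).powersetCard (min k d))
    (fun S => ∑ i ∈ S, (x i) ^ 2)
    ((Finset.powersetCard_nonempty).2 (by simp))).choose_spec
  obtain ⟨hmem, hmax⟩ := h
  refine ⟨Finset.mem_powersetCard_univ.mp hmem, ?_⟩
  intro S hS
  exact hmax S (Finset.mem_powersetCard_univ.mpr hS)

lemma norm_sq_eq {d : ℕ} (x : EuclideanSpace ℝ (Fin d)) : ‖x‖ ^ 2 = ∑ i, (x i) ^ 2 := by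
  rw [EuclideanSpace.norm_eq, Real.sq_sqrt (by positivity)]
  simp [Real.norm_eq_abs, sq_abs]

lemma keyreal (a b c t m j k l u M : ℝ) (ha : a ≤ j * t) (hb : b ≤ k * t) (hc : l * t ≤ c)
    (hjk : j + k = m) (hjl : j + l = u) (hmM : m ≤ M) (hMu : M ≤ u) (ht : 0 ≤ t)
    (hmz : 0 ≤ m) (hMz : 0 ≤ M) :
    M * (a + b) ≤ m * (a + c) := by
  have hk : k = m - j := by linarith
  have hl : l = u - j := by linarith
  subst hk hl
  nlinarith [mul_le_mul_of_nonneg_left hb hMz, mul_le_mul_of_nonneg_left hc hmz,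
    mul_nonneg (sub_nonneg.mpr hmM) (sub_nonneg.mpr ha),
    mul_nonneg (mul_nonneg hmz ht) (sub_nonneg.mpr hMu)]

lemma key {d : ℕ} (z : Fin d → ℝ) (T U : Finset (Fin d)) (M : ℕ)
    (hMU : M ≤ U.card) (hTM : d - T.card ≤ M)
    (hswap : ∀ i ∈ T, ∀ j, j ∉ T → (z j) ^ 2 ≤ (z i) ^ 2) :
    (M : ℝ) * ∑ i ∈ Tᶜ, (z i) ^ 2 ≤ ((Tᶜ.card : ℝ)) * ∑ i ∈ U, (z i) ^ 2 := by
  rcases T.eq_empty_or_nonempty with hT | hT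
  · subst hT
    have hUd : U.card ≤ d := by simpa using Finset.card_le_univ U
    have hMd : M = d := by simp at hTM; omega
    have hUcard : U = univ := Finset.eq_univ_of_card U (by simp; omega)
    subst hUcard
    simp [hMd]
  · obtain ⟨i₀, hi₀T, hmin⟩ := T.exists_min_image (fun i => (z i) ^ 2) hT
    set t := (z i₀) ^ 2 with htdef
    have ht : 0 ≤ t := sq_nonneg _
    set A := Tᶜ with hA
    set a := ∑ i ∈ A ∩ U, (z i) ^ 2 with hadef
    set b := ∑ i ∈ A \ U, (z i) ^ 2 with hbdef
    set c := ∑ i ∈ U \ A, (z i) ^ 2 with hcdef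
    have hsumA : ∑ i ∈ A, (z i) ^ 2 = a + b := (Finset.sum_inter_add_sum_sdiff A U _).symm
    have hsumU : ∑ i ∈ U, (z i) ^ 2 = a + c := by
      rw [← Finset.sum_inter_add_sum_sdiff U A (fun i => (z i) ^ 2), Finset.inter_comm]
    have ha : a ≤ ((A ∩ U).card : ℝ) * t := by
      rw [← nsmul_eq_mul]
      apply Finset.sum_le_card_nsmul
      intro x hx
      have hxA : x ∈ A := (Finset.mem_inter.mp hx).1
      exact hswap i₀ hi₀T x (by simpa [hA] using hxA)
    have hb : b ≤ ((A \ U).card : ℝ) * t := by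
      rw [← nsmul_eq_mul]
      apply Finset.sum_le_card_nsmul
      intro x hx
      have hxA : x ∈ A := (Finset.mem_sdiff.mp hx).1
      exact hswap i₀ hi₀T x (by simpa [hA] using hxA)
    have hc : ((U \ A).card : ℝ) * t ≤ c := by
      rw [← nsmul_eq_mul]
      apply Finset.card_nsmul_le_sum
      intro x hx
      have hxT : x ∈ T := by
        have := (Finset.mem_sdiff.mp hx).2
        simpa [hA] using this
      exact hmin x hxT
    have hcard1 : ((A ∩ U).card : ℝ) + ((A \ U).card : ℝ) = (A.card : ℝ) := by
      exact_mod_cast congrArg (Nat.cast : ℕ → ℝ) (Finset.card_inter_add_card_sdiff A U)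
    have hcard2 : ((A ∩ U).card : ℝ) + ((U \ A).card : ℝ) = (U.card : ℝ) := by
      rw [Finset.inter_comm]
      exact_mod_cast congrArg (Nat.cast : ℕ → ℝ) (Finset.card_inter_add_card_sdiff U A)
    have hmM : (A.card : ℝ) ≤ (M : ℝ) := by
      have : A.card = d - T.card := by simp [hA, Finset.card_compl]
      exact_mod_cast by omega
    have hMu : (M : ℝ) ≤ (U.card : ℝ) := by exact_mod_cast hMU
    have haz : 0 ≤ a := Finset.sum_nonneg fun i _ => sq_nonneg _
    have hcz : 0 ≤ c := Finset.sum_nonneg fun i _ => sq_nonneg _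
    have hMz : (0 : ℝ) ≤ (M : ℝ) := Nat.cast_nonneg _
    have hmz : (0 : ℝ) ≤ (A.card : ℝ) := Nat.cast_nonneg _
    rw [hsumA, hsumU]
    exact keyreal a b c t _ _ _ _ _ _ ha hb hc hcard1 hcard2 hmM hMu ht hmz hMz

theorem stmt1 (d s sstar : ℕ) (h1 : sstar ≤ s) (h2 : s ≤ d)
    (z θhat : EuclideanSpace ℝ (Fin d)) (hsp : (supp θhat).card ≤ sstar) :
    ‖HT s z - z‖ ^ 2 ≤ (((d : ℝ) - s) / ((d : ℝ) - sstar)) * ‖θhat - z‖ ^ 2 := by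
  obtain ⟨hcard, hmax⟩ := htSet_spec s z
  set T := htSet s z with hTdef
  have hTcard : T.card = s := by rw [hcard]; exact min_eq_left h2
  have hswap : ∀ i ∈ T, ∀ j, j ∉ T → (z j) ^ 2 ≤ (z i) ^ 2 := by
    intro i hi j hj
    by_contra hcon; push_neg at hcon
    have hjne : j ∉ T.erase i := fun h => hj (Finset.mem_of_mem_erase h)
    have hspos : 1 ≤ s := hTcard ▸ Finset.card_pos.mpr ⟨i, hi⟩
    have hS : (insert j (T.erase i)).card = min s d := by
      rw [Finset.card_insert_of_notMem hjne, Finset.card_erase_of_mem hi, hTcard,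
        min_eq_left h2]
      omega
    have hle := hmax _ hS
    rw [Finset.sum_insert hjne, Finset.sum_erase_eq_sub hi] at hle
    linarith
  have hLHS : ‖HT s z - z‖ ^ 2 = ∑ i ∈ Tᶜ, (z i) ^ 2 := by
    rw [norm_sq_eq]
    have hpt : ∀ i, ((HT s z - z) i) ^ 2 = if i ∈ Tᶜ then (z i) ^ 2 else 0 := by
      intro i
      by_cases h : i ∈ T
      · simp [HT, PiLp.sub_apply, ← hTdef, h]
      · simp [HT, PiLp.sub_apply, ← hTdef, h]
    simp_rw [hpt]
    rw [Finset.sum_ite_mem, Finset.univ_inter]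
  have hRHS : ∑ i ∈ (supp θhat)ᶜ, (z i) ^ 2 ≤ ‖θhat - z‖ ^ 2 := by
    rw [norm_sq_eq]
    calc ∑ i ∈ (supp θhat)ᶜ, (z i) ^ 2
        = ∑ i ∈ (supp θhat)ᶜ, ((θhat - z) i) ^ 2 := by
          apply Finset.sum_congr rfl
          intro i hi
          have hz : θhat i = 0 := by
            by_contra h
            exact (Finset.mem_compl.mp hi) (by simp [supp, h])
          rw [PiLp.sub_apply, hz]
          ring
      _ ≤ ∑ i, ((θhat - z) i) ^ 2 :=
          Finset.sum_le_sum_of_subset_of_nonneg (Finset.subset_univ _)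
            (fun i _ _ => sq_nonneg _)
  have hUcard : d - sstar ≤ ((supp θhat)ᶜ).card := by
    rw [Finset.card_compl]
    simp only [Fintype.card_fin]
    omega
  have hkey := key z T ((supp θhat)ᶜ) (d - sstar) hUcard (by rw [hTcard]; omega) hswap
  have hTc : ((Tᶜ.card : ℕ) : ℝ) = (d : ℝ) - s := by
    rw [Finset.card_compl, hTcard, Fintype.card_fin, Nat.cast_sub h2]
  have hM : (((d - sstar : ℕ)) : ℝ) = (d : ℝ) - sstar := by
    rw [Nat.cast_sub (le_trans h1 h2)]
  rcases eq_or_lt_of_le (le_trans h1 h2) with hd | hd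
  · have hs : s = d := le_antisymm h2 (hd ▸ h1)
    have hTe : Tᶜ = ∅ := by
      rw [← Finset.card_eq_zero, Finset.card_compl, hTcard, Fintype.card_fin]
      omega
    rw [hLHS, hTe, Finset.sum_empty, hs]
    simp
  · have hpos : (0 : ℝ) < (d : ℝ) - sstar := by
      have : (sstar : ℝ) < (d : ℝ) := by exact_mod_cast hd
      linarith
    rw [div_mul_eq_mul_div, le_div_iff₀ hpos, hLHS]
    rw [hM, hTc] at hkey
    have hds : (0 : ℝ) ≤ (d : ℝ) - s := by
      have : (s : ℝ) ≤ (d : ℝ) := by exact_mod_cast h2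
      linarith
    have h2' := mul_le_mul_of_nonneg_left hRHS hds
    nlinarith [hkey, h2']
end
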